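/- Let A be a separable C*-algebra whose set of tracial states is nonempty and compact (in the weak-* topology), and suppose A satisfies uniform property Γ. Then for every k ∈ ℕ, the matrix algebra M_k(A) of k×k matrices over A (with its C*-norm) also satisfies uniform property Γ (with respect to the tracial states of M_k(A)). -/

import Mathlib

open scoped ComplexOrder

def IsTracialState {A : Type*} [NonUnitalCStarAlgebra A] (τ : A →L[ℂ] ℂ) : Prop :=
  ‖τ‖ = 1 ∧ (∀ a : A, 0 ≤ τ (star a * a)) ∧ ∀ a b : A, τ (a * b) = τ (b * a)

def IsPositiveElem {A : Type*} [NonUnitalCStarAlgebra A] (a : A) : Prop := ∃ b, a = star b * b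

def UniformPropertyGamma (A : Type*) [NonUnitalCStarAlgebra A] : Prop :=
  ∀ (F : Finset A) (ε : ℝ), 0 < ε → ∀ n : ℕ, 0 < n →
    ∃ e : Fin n → A,
      (∀ i, IsPositiveElem (e i) ∧ ‖e i‖ ≤ 1) ∧
      (∀ i j, i ≠ j → e i * e j = 0) ∧
      ∀ i, ∀ a ∈ F, ‖e i * a - a * e i‖ < ε ∧
        ∀ τ : A →L[ℂ] ℂ, IsTracialState τ → ‖τ (a * e i) - (1 / (n : ℂ)) * τ a‖ < ε

def IsSimpleCStarAlgebra (A : Type*) [NonUnitalCStarAlgebra A] : Prop :=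
  ∀ I : TwoSidedIdeal A, IsClosed (I : Set A) → (I : Set A) = {0} ∨ (I : Set A) = Set.univ

def CuntzSubeqIn {A : Type*} [NonUnitalCStarAlgebra A] (S : Set A) (a b : A) : Prop :=
  ∃ r : ℕ → A, (∀ k, r k ∈ S) ∧
    Filter.Tendsto (fun k => ‖star (r k) * b * r k - a‖) Filter.atTop (nhds 0)

def CuntzSubeq {A : Type*} [NonUnitalCStarAlgebra A] (a b : A) : Prop :=
  CuntzSubeqIn Set.univ a b

variable {G A : Type*} [Monoid G] [CStarAlgebra A]

def fixedPointAlgebra (α : G →* (A ≃ₐ[ℂ] A))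
    (hstar : ∀ g (a : A), α g (star a) = star (α g a)) : StarSubalgebra ℂ A where
  carrier := {a | ∀ g, α g a = a}
  mul_mem' := fun {a b} ha hb g => by rw [map_mul, ha g, hb g]
  add_mem' := fun {a b} ha hb g => by rw [map_add, ha g, hb g]
  algebraMap_mem' := fun c g => (α g).commutes c
  star_mem' := fun {a} ha g => by rw [hstar g a, ha g]

theorem isClosed_fixedPointAlgebra (α : G →* (A ≃ₐ[ℂ] A))
    (hstar : ∀ g (a : A), α g (star a) = star (α g a)) :
    IsClosed ((fixedPointAlgebra α hstar : StarSubalgebra ℂ A) : Set A) := by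
  have h : ((fixedPointAlgebra α hstar : StarSubalgebra ℂ A) : Set A)
      = ⋂ g, {a : A | α g a = a} := by
    ext a; simp [fixedPointAlgebra, Set.mem_iInter]
  rw [h]
  refine isClosed_iInter fun g => ?_
  let φ : A ≃⋆ₐ[ℂ] A :=
    { (α g).toRingEquiv with
      map_star' := hstar g
      map_smul' := fun c a => map_smul (α g) c a }
  have hcont : Continuous fun a : A => α g a :=
    (NonUnitalStarAlgHom.isometry φ φ.injective).continuous
  exact isClosed_eq hcont continuous_id

/-- The set of tracial states of `A`, as a subset of the weak-* dual of `A`. -/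
def TracialStateSet (A : Type*) [NonUnitalCStarAlgebra A] : Set (WeakDual ℂ A) :=
  {τ | IsTracialState (WeakDual.toStrongDual τ)}

namespace MyGamma



variable {A MA : Type*} [NonUnitalCStarAlgebra A] [NonUnitalCStarAlgebra MA]
variable {k : ℕ} (e : MA ≃⋆ₐ[ℂ] Matrix (Fin k) (Fin k) A)

lemma star_stdBasisMatrix (p q : Fin k) (x : A) :
    star (Matrix.single p q x) = Matrix.single q p (star x) := by
  ext i j
  simp only [Matrix.star_apply, Matrix.single, Matrix.of_apply]
  by_cases h1 : q = i <;> by_cases h2 : p = j <;> simp [h1, h2]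

noncomputable def diagHom : A →⋆ₙₐ[ℂ] MA where
  toFun x := e.symm (Matrix.diagonal fun _ => x)
  map_add' x y := by
    show e.symm (Matrix.diagonal fun _ => x + y)
      = e.symm (Matrix.diagonal fun _ => x) + e.symm (Matrix.diagonal fun _ => y)
    rw [← map_add]
    refine congrArg _ ?_
    ext i j
    by_cases h : i = j <;> simp [Matrix.diagonal_apply, h]
  map_zero' := by
    show e.symm (Matrix.diagonal fun _ => (0 : A)) = 0
    have : Matrix.diagonal (fun _ : Fin k => (0 : A)) = 0 := by
      ext i j; by_cases h : i = j <;> simp [Matrix.diagonal_apply, h]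
    rw [this, map_zero]
  map_mul' x y := by
    show e.symm (Matrix.diagonal fun _ => x * y)
      = e.symm (Matrix.diagonal fun _ => x) * e.symm (Matrix.diagonal fun _ => y)
    rw [← map_mul, Matrix.diagonal_mul_diagonal]
  map_smul' c x := by
    show e.symm (Matrix.diagonal fun _ => c • x) = c • e.symm (Matrix.diagonal fun _ => x)
    rw [← map_smul]
    refine congrArg _ ?_
    ext i j
    by_cases h : i = j <;> simp [Matrix.diagonal_apply, h]
  map_star' x := by
    show e.symm (Matrix.diagonal fun _ => star x) = star (e.symm (Matrix.diagonal fun _ => x))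
    rw [← map_star]
    refine congrArg _ ?_
    ext i j
    by_cases h : i = j <;> simp [Matrix.star_apply, Matrix.diagonal_apply, h, eq_comm]

noncomputable def singleHom (q : Fin k) : A →⋆ₙₐ[ℂ] MA where
  toFun x := e.symm (Matrix.single q q x)
  map_add' x y := by
    show e.symm _ = e.symm _ + e.symm _
    rw [← map_add, Matrix.single_add]
  map_zero' := by
    show e.symm (Matrix.single q q (0 : A)) = 0
    rw [Matrix.single_zero, map_zero]
  map_mul' x y := by
    show e.symm _ = e.symm _ * e.symm _
    rw [← map_mul, Matrix.single_mul_single_same x q q q y]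
  map_smul' c x := by
    show e.symm (Matrix.single q q (c • x)) = c • e.symm (Matrix.single q q x)
    rw [← map_smul, ← Matrix.smul_single]
  map_star' x := by
    show e.symm (Matrix.single q q (star x)) = star (e.symm (Matrix.single q q x))
    rw [← map_star, star_stdBasisMatrix]

lemma norm_symm_stdBasisMatrix_le (p q : Fin k) (x : A) :
    ‖e.symm (Matrix.single p q x)‖ ≤ ‖x‖ := by
  have h1 : star (e.symm (Matrix.single p q x)) * e.symm (Matrix.single p q x)
      = singleHom e q (star x * x) := by
    show _ = e.symm (Matrix.single q q (star x * x))
    rw [← map_star, star_stdBasisMatrix, ← map_mul, Matrix.single_mul_single_same (star x) q p q x]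
  have h2 : ‖e.symm (Matrix.single p q x)‖ * ‖e.symm (Matrix.single p q x)‖
      ≤ ‖x‖ * ‖x‖ := by
    rw [← CStarRing.norm_star_mul_self, h1]
    calc ‖singleHom e q (star x * x)‖ ≤ ‖star x * x‖ := NonUnitalStarAlgHom.norm_apply_le _ _
      _ = ‖x‖ * ‖x‖ := CStarRing.norm_star_mul_self
  nlinarith [norm_nonneg (e.symm (Matrix.single p q x)), norm_nonneg x]

lemma norm_symm_le (M : Matrix (Fin k) (Fin k) A) :
    ‖e.symm M‖ ≤ ∑ p : Fin k, ∑ q : Fin k, ‖M p q‖ := by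
  conv_lhs => rw [Matrix.matrix_eq_sum_single M]
  rw [map_sum]
  refine (norm_sum_le _ _).trans (Finset.sum_le_sum fun p _ => ?_)
  rw [map_sum]
  exact (norm_sum_le _ _).trans
    (Finset.sum_le_sum fun q _ => norm_symm_stdBasisMatrix_le e p q (M p q))



lemma decompSA (s : A) (hs : IsSelfAdjoint s) :
    ∃ c d : A, s = star c * c - star d * d := by
  set f : ℝ → ℝ := fun x => Real.sqrt (max x 0) with hf
  set g : ℝ → ℝ := fun x => Real.sqrt (max (-x) 0) with hg
  have hfc : Continuous f := Real.continuous_sqrt.comp (continuous_id.max continuous_const)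
  have hgc : Continuous g := Real.continuous_sqrt.comp (continuous_neg.max continuous_const)
  have hf0 : f 0 = 0 := by simp [hf]
  have hg0 : g 0 = 0 := by simp [hg]
  refine ⟨cfcₙ f s, cfcₙ g s, ?_⟩
  have hcs : IsSelfAdjoint (cfcₙ f s) := cfcₙ_predicate f s
  have hds : IsSelfAdjoint (cfcₙ g s) := cfcₙ_predicate g s
  rw [hcs.star_eq, hds.star_eq, ← cfcₙ_mul f f s, ← cfcₙ_mul g g s, ← cfcₙ_sub _ _ s]
  have hkey : (fun x : ℝ => f x * f x - g x * g x) = fun x : ℝ => x := by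
    funext x
    simp only [hf, hg]
    rw [Real.mul_self_sqrt (le_max_right _ _), Real.mul_self_sqrt (le_max_right _ _)]
    rcases le_total x 0 with h | h
    · rw [max_eq_right h, max_eq_left (by linarith)]; ring
    · rw [max_eq_left h, max_eq_right (by linarith)]; ring
  rw [hkey, cfcₙ_id' ℝ s]

lemma decompose (x : A) :
    ∃ b₁ b₂ b₃ b₄ : A, x = star b₁ * b₁ - star b₂ * b₂
      + Complex.I • (star b₃ * b₃ - star b₄ * b₄) := by
  obtain ⟨c₁, d₁, h₁⟩ := decompSA ((realPart x : selfAdjoint A) : A) (realPart x).2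
  obtain ⟨c₂, d₂, h₂⟩ := decompSA ((imaginaryPart x : selfAdjoint A) : A) (imaginaryPart x).2
  exact ⟨c₁, d₁, c₂, d₂, by rw [← h₁, ← h₂, realPart_add_I_smul_imaginaryPart]⟩

lemma linearMap_ext_of_star_mul_self (f g : A →ₗ[ℂ] ℂ)
    (h : ∀ b : A, f (star b * b) = g (star b * b)) (x : A) : f x = g x := by
  obtain ⟨b₁, b₂, b₃, b₄, hx⟩ := decompose x
  rw [hx]
  simp only [map_add, map_sub, map_smul, h]


noncomputable def sigma (τ : MA →L[ℂ] ℂ) (p q : Fin k) : A →ₗ[ℂ] ℂ where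
  toFun x := τ (e.symm (Matrix.single p q x))
  map_add' x y := by
    show τ (e.symm (Matrix.single p q (x + y))) = _ + _
    rw [Matrix.single_add, map_add, map_add]
  map_smul' c x := by
    show τ (e.symm (Matrix.single p q (c • x))) = _
    rw [← Matrix.smul_single, map_smul, map_smul]; rfl

lemma sigma_apply (τ : MA →L[ℂ] ℂ) (p q : Fin k) (x : A) :
    sigma e τ p q x = τ (e.symm (Matrix.single p q x)) := rfl

lemma tau_symm_eq (τ : MA →L[ℂ] ℂ) (M : Matrix (Fin k) (Fin k) A) :
    τ (e.symm M) = ∑ p : Fin k, ∑ q : Fin k, sigma e τ p q (M p q) := by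
  conv_lhs => rw [Matrix.matrix_eq_sum_single M]
  simp only [map_sum]
  rfl

lemma sigma_mul_eq_zero (τ : MA →L[ℂ] ℂ) (htr : ∀ a b : MA, τ (a * b) = τ (b * a))
    {p q : Fin k} (hpq : p ≠ q) (x y : A) : sigma e τ p q (x * y) = 0 := by
  rw [sigma_apply,
    show Matrix.single p q (x * y)
        = Matrix.single p q x * Matrix.single q q y from
      (Matrix.single_mul_single_same x p q q y).symm,
    map_mul e.symm, htr, ← map_mul e.symm,
    Matrix.single_mul_single_of_ne y q q p (Ne.symm hpq) x, map_zero, map_zero]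

lemma sigma_eq_zero (τ : MA →L[ℂ] ℂ) (htr : ∀ a b : MA, τ (a * b) = τ (b * a))
    {p q : Fin k} (hpq : p ≠ q) (x : A) : sigma e τ p q x = 0 := by
  have := linearMap_ext_of_star_mul_self (sigma e τ p q) 0
    (fun b => by rw [sigma_mul_eq_zero e τ htr hpq]; rfl) x
  simpa using this

lemma sigma_diag_mul (τ : MA →L[ℂ] ℂ) (htr : ∀ a b : MA, τ (a * b) = τ (b * a))
    (p q : Fin k) (x y : A) : sigma e τ p p (x * y) = sigma e τ q q (y * x) := by
  rw [sigma_apply, sigma_apply,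
    show Matrix.single p p (x * y)
        = Matrix.single p q x * Matrix.single q p y from
      (Matrix.single_mul_single_same x p q p y).symm,
    show Matrix.single q q (y * x)
        = Matrix.single q p y * Matrix.single p q x from
      (Matrix.single_mul_single_same y q p q x).symm,
    map_mul e.symm, map_mul e.symm, htr]

lemma sigma_diag_eq (τ : MA →L[ℂ] ℂ) (htr : ∀ a b : MA, τ (a * b) = τ (b * a))
    (p q : Fin k) (x : A) : sigma e τ p p x = sigma e τ q q x := by
  refine linearMap_ext_of_star_mul_self _ _ (fun b => ?_) x
  rw [sigma_diag_mul e τ htr p q, sigma_diag_mul e τ htr q q (star b) b]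

noncomputable def diagFunctional (τ : MA →L[ℂ] ℂ) : A →L[ℂ] ℂ :=
  LinearMap.mkContinuous
    { toFun := fun x => τ (diagHom e x)
      map_add' := fun x y => by
        show τ (diagHom e (x + y)) = _ + _
        rw [map_add, map_add]
      map_smul' := fun c x => by
        show τ (diagHom e (c • x)) = _
        rw [map_smul, map_smul]; rfl }
    ‖τ‖ (fun x => by
      calc ‖τ (diagHom e x)‖ ≤ ‖τ‖ * ‖diagHom e x‖ := τ.le_opNorm _
        _ ≤ ‖τ‖ * ‖x‖ :=
          mul_le_mul_of_nonneg_left (NonUnitalStarAlgHom.norm_apply_le _ _) (norm_nonneg τ))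

lemma diagFunctional_apply (τ : MA →L[ℂ] ℂ) (x : A) :
    diagFunctional e τ x = τ (diagHom e x) := rfl

lemma norm_diagFunctional_le (τ : MA →L[ℂ] ℂ) : ‖diagFunctional e τ‖ ≤ ‖τ‖ :=
  LinearMap.mkContinuous_norm_le _ (norm_nonneg τ) _

lemma diagonal_eq_sum_std (x : A) :
    Matrix.diagonal (fun _ : Fin k => x) = ∑ q : Fin k, Matrix.single q q x := by
  ext i j
  rw [Matrix.sum_apply]
  by_cases h : i = j
  · subst h
    rw [Matrix.diagonal_apply_eq]
    rw [Finset.sum_eq_single i (fun q _ hq => by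
      simp only [Matrix.single, Matrix.of_apply]
      simp [hq]) (by simp)]
    simp [Matrix.single]
  · rw [Matrix.diagonal_apply_ne _ h]
    refine (Finset.sum_eq_zero fun q _ => ?_).symm
    simp only [Matrix.single, Matrix.of_apply, ite_eq_right_iff]
    rintro ⟨rfl, rfl⟩
    exact absurd rfl h

lemma diagFunctional_eq_sum (τ : MA →L[ℂ] ℂ) (x : A) :
    diagFunctional e τ x = ∑ q : Fin k, sigma e τ q q x := by
  rw [diagFunctional_apply]
  show τ (e.symm (Matrix.diagonal fun _ => x)) = _
  rw [diagonal_eq_sum_std]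
  simp only [map_sum]
  rfl

end MyGamma

/-- If `A` is a separable C*-algebra with nonempty weak-*-compact tracial state space
satisfying uniform property Γ, then the C*-algebra `M_k(A)` of `k × k` matrices over `A` also
satisfies uniform property Γ.  Since Mathlib does not carry a C*-norm on matrix algebras over
an abstract C*-algebra, and since the C*-norm on `M_k(A)` is unique, we formalize `M_k(A)`
with its C*-norm as an arbitrary C*-algebra `MA` which is *-isomorphic (as a complex star
algebra) to `Matrix (Fin k) (Fin k) A`. -/
theorem matrix_uniformPropertyGamma
    {A : Type*} [NonUnitalCStarAlgebra A] [TopologicalSpace.SeparableSpace A]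
    (htrace : (TracialStateSet A).Nonempty)
    (hcompact : IsCompact (TracialStateSet A))
    (hΓ : UniformPropertyGamma A)
    (k : ℕ) (MA : Type*) [NonUnitalCStarAlgebra MA]
    (e : MA ≃⋆ₐ[ℂ] Matrix (Fin k) (Fin k) A) :
    UniformPropertyGamma MA := by
  classical
  rcases Nat.eq_zero_or_pos k with hk0 | hk
  · subst hk0
    have hsub : ∀ x y : MA, x = y := fun x y => e.injective (by ext i j; exact i.elim0)
    intro F ε hε n hn
    refine ⟨fun _ => 0, fun i => ⟨⟨0, hsub _ _⟩, by simp⟩,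
      fun i j _ => hsub _ _, fun i a ha => ⟨?_, ?_⟩⟩
    · rw [hsub (0 * a - a * 0) 0]; simpa using hε
    · intro τ hτ
      exfalso
      have h0 : τ = 0 := by ext x; rw [hsub x 0]; simp
      rw [h0] at hτ
      simpa using hτ.1
  · have hnek : Nonempty (Fin k) := ⟨⟨0, hk⟩⟩
    intro F ε hε n hn
    have hkR : (0:ℝ) < k := by exact_mod_cast hk
    set ε' : ℝ := ε / (k * k + 1) with hε'def
    have hε' : 0 < ε' := by positivity
    have hε'ε : ε' < ε := by
      rw [hε'def]
      exact div_lt_self hε (by nlinarith)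
    let F' : Finset A := F.biUnion fun a =>
      Finset.image (fun pq : Fin k × Fin k => e a pq.1 pq.2) Finset.univ
    obtain ⟨g, hg1, hg2, hg3⟩ := hΓ F' ε' hε' n hn
    refine ⟨fun i => MyGamma.diagHom e (g i), fun i => ?_, fun i j hij => ?_, fun i a ha => ?_⟩
    · obtain ⟨⟨b, hb⟩, hnorm⟩ := hg1 i
      refine ⟨⟨MyGamma.diagHom e b, ?_⟩,
        (NonUnitalStarAlgHom.norm_apply_le _ _).trans hnorm⟩
      show MyGamma.diagHom e (g i) = _
      rw [hb, map_mul, map_star]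
    · rw [← map_mul, hg2 i j hij, map_zero]
    · have hBmem : ∀ p q : Fin k, e a p q ∈ F' := fun p q =>
        Finset.mem_biUnion.mpr ⟨a, ha, Finset.mem_image.mpr ⟨(p, q), Finset.mem_univ _, rfl⟩⟩
      have haB : a = e.symm (e a) := (e.symm_apply_apply a).symm
      constructor
      · -- commutator bound
        set M : Matrix (Fin k) (Fin k) A :=
          (Matrix.diagonal fun _ => g i) * e a - e a * Matrix.diagonal fun _ => g i with hM
        have h1 : MyGamma.diagHom e (g i) * a - a * MyGamma.diagHom e (g i) = e.symm M := by
          rw [hM, map_sub, map_mul e.symm, map_mul e.symm, ← haB]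
          rfl
        rw [h1]
        refine (MyGamma.norm_symm_le e M).trans_lt ?_
        have hterm : ∀ p q : Fin k, ‖M p q‖ < ε' := by
          intro p q
          have h2 : M p q = g i * e a p q - e a p q * g i := by
            rw [hM]
            simp [Matrix.sub_apply, Matrix.diagonal_mul, Matrix.mul_diagonal]
          rw [h2]
          exact (hg3 i (e a p q) (hBmem p q)).1
        have hinner : ∀ p : Fin k, ∑ q : Fin k, ‖M p q‖ < (k:ℝ) * ε' := by
          intro p
          calc ∑ q : Fin k, ‖M p q‖
              < ∑ _q : Fin k, ε' :=
                Finset.sum_lt_sum_of_nonempty Finset.univ_nonempty (fun q _ => hterm p q)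
            _ = (k:ℝ) * ε' := by
                rw [Finset.sum_const, Finset.card_univ, Fintype.card_fin, nsmul_eq_mul]
        calc ∑ p : Fin k, ∑ q : Fin k, ‖M p q‖
            < ∑ _p : Fin k, (k:ℝ) * ε' :=
              Finset.sum_lt_sum_of_nonempty Finset.univ_nonempty (fun p _ => hinner p)
          _ = (k:ℝ) * ((k:ℝ) * ε') := by
              rw [Finset.sum_const, Finset.card_univ, Fintype.card_fin, nsmul_eq_mul]
          _ < ε := by
              have hc : ε' * ((k:ℝ) * (k:ℝ) + 1) = ε := div_mul_cancel₀ ε (by positivity)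
              nlinarith [hε']
      · -- trace condition
        intro τ hτ
        obtain ⟨hτ1, hτpos, hτtr⟩ := hτ
        set S := MyGamma.diagFunctional e τ with hSdef
        have hknz : ((k:ℕ):ℂ) ≠ 0 := Nat.cast_ne_zero.mpr hk.ne'
        set p0 : Fin k := ⟨0, hk⟩ with hp0
        have key : ∀ M : Matrix (Fin k) (Fin k) A,
            τ (e.symm M) = ∑ p : Fin k, MyGamma.sigma e τ p0 p0 (M p p) := by
          intro M
          rw [MyGamma.tau_symm_eq e τ M]
          refine Finset.sum_congr rfl fun p _ => ?_
          rw [Finset.sum_eq_single p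
            (fun q _ hqp => MyGamma.sigma_eq_zero e τ hτtr (Ne.symm hqp) _)
            (fun h => absurd (Finset.mem_univ p) h)]
          exact MyGamma.sigma_diag_eq e τ hτtr p p0 (M p p)
        have hSσ : ∀ x : A, S x = (k:ℂ) * MyGamma.sigma e τ p0 p0 x := fun x => by
          rw [hSdef, MyGamma.diagFunctional_eq_sum,
            Finset.sum_congr rfl fun q _ => MyGamma.sigma_diag_eq e τ hτtr q p0 x,
            Finset.sum_const, Finset.card_univ, Fintype.card_fin, nsmul_eq_mul]
        have hσ0S : ∀ x : A, MyGamma.sigma e τ p0 p0 x = (k:ℂ)⁻¹ * S x := fun x => by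
          rw [hSσ x, ← mul_assoc, inv_mul_cancel₀ hknz, one_mul]
        have hT1 : τ (a * MyGamma.diagHom e (g i))
            = ∑ p : Fin k, MyGamma.sigma e τ p0 p0 (e a p p * g i) := by
          have h2 : a * MyGamma.diagHom e (g i)
              = e.symm (e a * Matrix.diagonal fun _ => g i) := by
            rw [map_mul e.symm, ← haB]; rfl
          rw [h2, key]
          exact Finset.sum_congr rfl fun p _ => by rw [Matrix.mul_diagonal]
        have hT2 : τ a = ∑ p : Fin k, MyGamma.sigma e τ p0 p0 (e a p p) := by
          conv_lhs => rw [haB]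
          rw [key]
        have hterm : ∀ p : Fin k,
            ‖S (e a p p * g i) - 1/(n:ℂ) * S (e a p p)‖ < ε' := by
          intro p
          by_cases hS0 : S = 0
          · rw [hS0]; simpa using hε'
          · have hSnorm : 0 < ‖S‖ := norm_pos_iff.mpr hS0
            have hSle : ‖S‖ ≤ 1 := (MyGamma.norm_diagFunctional_le e τ).trans (le_of_eq hτ1)
            set θ : A →L[ℂ] ℂ := ((‖S‖⁻¹ : ℝ) : ℂ) • S with hθ
            have hθap : ∀ x : A, θ x = ((‖S‖⁻¹ : ℝ) : ℂ) * S x := fun x => rfl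
            have hθτ : IsTracialState θ := by
              refine ⟨?_, ?_, ?_⟩
              · rw [hθ, norm_smul ((‖S‖⁻¹ : ℝ) : ℂ) S, Complex.norm_real, Real.norm_eq_abs,
                  abs_of_nonneg (inv_nonneg.mpr hSnorm.le), inv_mul_cancel₀ hSnorm.ne']
              · intro x
                have h3 : S (star x * x)
                    = τ (star (MyGamma.diagHom e x) * MyGamma.diagHom e x) := by
                  rw [MyGamma.diagFunctional_apply, map_mul, map_star]
                have h4 : 0 ≤ S (star x * x) := h3 ▸ hτpos _
                rw [hθap]
                exact mul_nonneg (Complex.zero_le_real.mpr (inv_nonneg.mpr hSnorm.le)) h4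
              · intro x y
                rw [hθap, hθap]
                congr 1
                rw [hSdef, MyGamma.diagFunctional_apply, MyGamma.diagFunctional_apply,
                  map_mul (MyGamma.diagHom e), map_mul (MyGamma.diagHom e), hτtr]
            have hθbound := (hg3 i (e a p p) (hBmem p p)).2 θ hθτ
            have hSθ : ∀ x : A, S x = ((‖S‖ : ℝ) : ℂ) * θ x := fun x => by
              rw [hθap, ← mul_assoc, ← Complex.ofReal_mul, mul_inv_cancel₀ hSnorm.ne',
                Complex.ofReal_one, one_mul]
            rw [hSθ, hSθ]
            have hfac : ((‖S‖:ℝ):ℂ) * θ (e a p p * g i)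
                - 1/(n:ℂ) * (((‖S‖:ℝ):ℂ) * θ (e a p p))
                = ((‖S‖:ℝ):ℂ) * (θ (e a p p * g i) - 1/(n:ℂ) * θ (e a p p)) := by ring
            rw [hfac, norm_mul, Complex.norm_real, Real.norm_of_nonneg hSnorm.le]
            calc ‖S‖ * ‖θ (e a p p * g i) - 1/(n:ℂ) * θ (e a p p)‖
                < ‖S‖ * ε' := mul_lt_mul_of_pos_left hθbound hSnorm
              _ ≤ ε' := mul_le_of_le_one_left hε'.le hSle
        have hfinal : τ (a * MyGamma.diagHom e (g i)) - 1/(n:ℂ) * τ a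
            = (k:ℂ)⁻¹ * ∑ p : Fin k, (S (e a p p * g i) - 1/(n:ℂ) * S (e a p p)) := by
          rw [hT1, hT2]
          simp only [hσ0S]
          calc (∑ p : Fin k, (k:ℂ)⁻¹ * S (e a p p * g i))
                - 1/(n:ℂ) * ∑ p : Fin k, (k:ℂ)⁻¹ * S (e a p p)
              = ∑ p : Fin k, (k:ℂ)⁻¹ * (S (e a p p * g i) - 1/(n:ℂ) * S (e a p p)) := by
                rw [Finset.mul_sum, ← Finset.sum_sub_distrib]
                exact Finset.sum_congr rfl fun p _ => by ring
            _ = (k:ℂ)⁻¹ * ∑ p : Fin k, (S (e a p p * g i) - 1/(n:ℂ) * S (e a p p)) :=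
                (Finset.mul_sum _ _ _).symm
        rw [hfinal, norm_mul, norm_inv, Complex.norm_natCast]
        have h6 : ‖∑ p : Fin k, (S (e a p p * g i) - 1/(n:ℂ) * S (e a p p))‖ < (k:ℝ) * ε' := by
          refine (norm_sum_le _ _).trans_lt ?_
          calc ∑ p : Fin k, ‖S (e a p p * g i) - 1/(n:ℂ) * S (e a p p)‖
              < ∑ _p : Fin k, ε' :=
                Finset.sum_lt_sum_of_nonempty Finset.univ_nonempty (fun p _ => hterm p)
            _ = (k:ℝ) * ε' := by
                rw [Finset.sum_const, Finset.card_univ, Fintype.card_fin, nsmul_eq_mul]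
        calc ((k:ℝ))⁻¹ * ‖∑ p : Fin k, (S (e a p p * g i) - 1/(n:ℂ) * S (e a p p))‖
            < ((k:ℝ))⁻¹ * ((k:ℝ) * ε') := mul_lt_mul_of_pos_left h6 (inv_pos.mpr hkR)
          _ = ε' := by field_simp
          _ < ε := hε'ε
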